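/- MIC sufficient condition for the ℓ_{1-2}-REC: Suppose ‖A_i‖_2 = 1 for each column i of A, and the mutual incoherence constant μ := max_{i≠j} |A_jᵀ A_i| satisfies μ < (√t − 1)/((s+t)(√t − 1) + 2√(t(s+t))(√s + 1)). Then A satisfies the ℓ_{1-2}-REC(s,t), with φ(s,t) ≥ (1 − (s+t)μ − 2μ√(t(s+t))(√s+1)/(√t−1))^{1/2} > 0. -/

import Mathlib

open Finset

noncomputable def l1 {k : ℕ} (x : Fin k → ℝ) : ℝ := ∑ i, |x i|

noncomputable def l2 {k : ℕ} (x : Fin k → ℝ) : ℝ := Real.sqrt (∑ i, (x i)^2)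

def restr {k : ℕ} (I : Finset (Fin k)) (x : Fin k → ℝ) : Fin k → ℝ :=
  fun i => if i ∈ I then x i else 0

def TLargest {k : ℕ} (x : Fin k → ℝ) (I : Finset (Fin k)) (t : ℕ) (T : Finset (Fin k)) : Prop :=
  T ⊆ Iᶜ ∧ T.card = min t Iᶜ.card ∧ ∀ i ∈ T, ∀ j ∈ Iᶜ \ T, |x j| ≤ |x i|

lemma l1_nonneg {k : ℕ} (x : Fin k → ℝ) : 0 ≤ l1 x :=
  Finset.sum_nonneg fun _ _ => abs_nonneg _

lemma l2_nonneg {k : ℕ} (x : Fin k → ℝ) : 0 ≤ l2 x := Real.sqrt_nonneg _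

lemma l2_sq {k : ℕ} (x : Fin k → ℝ) : (l2 x)^2 = ∑ i, (x i)^2 :=
  Real.sq_sqrt (Finset.sum_nonneg fun _ _ => sq_nonneg _)

lemma l1_restr {k : ℕ} (J : Finset (Fin k)) (x : Fin k → ℝ) :
    l1 (restr J x) = ∑ i ∈ J, |x i| := by
  unfold l1 restr
  simp only [apply_ite abs, abs_zero]
  rw [Finset.sum_ite_mem, Finset.univ_inter]

lemma l2sq_restr {k : ℕ} (J : Finset (Fin k)) (x : Fin k → ℝ) :
    (l2 (restr J x))^2 = ∑ i ∈ J, (x i)^2 := by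
  rw [l2_sq]
  have h : ∀ i, (restr J x i)^2 = if i ∈ J then (x i)^2 else 0 := by
    intro i; unfold restr; split <;> simp
  rw [Finset.sum_congr rfl fun i _ => h i, Finset.sum_ite_mem, Finset.univ_inter]

lemma gram {m n : ℕ} (A : Matrix (Fin m) (Fin n) ℝ) (y z : Fin n → ℝ) :
    ∑ k, A.mulVec y k * A.mulVec z k
      = ∑ i, ∑ j, y i * z j * (∑ k, A k i * A k j) := by
  have step : ∑ k, A.mulVec y k * A.mulVec z k
      = ∑ k : Fin m, ∑ j : Fin n, ∑ i : Fin n, A k i * y i * (A k j * z j) := by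
    simp only [Matrix.mulVec, dotProduct, Finset.sum_mul, Finset.mul_sum]
  have h1 : ∀ k : Fin m, ∑ j : Fin n, ∑ i : Fin n, A k i * y i * (A k j * z j)
      = ∑ i : Fin n, ∑ j : Fin n, A k i * y i * (A k j * z j) := fun k => Finset.sum_comm
  rw [step, Finset.sum_congr rfl fun k _ => h1 k, Finset.sum_comm]
  refine Finset.sum_congr rfl fun i _ => ?_
  rw [Finset.sum_comm]
  refine Finset.sum_congr rfl fun j _ => ?_
  rw [Finset.mul_sum]
  refine Finset.sum_congr rfl fun k _ => by ring

lemma diag_bound {m n : ℕ} (A : Matrix (Fin m) (Fin n) ℝ) (μ : ℝ) (hμ0 : 0 ≤ μ)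
    (hcol : ∀ i, ∑ k, (A k i)^2 = 1)
    (hμ : ∀ i j, i ≠ j → |∑ k, A k j * A k i| ≤ μ) (y : Fin n → ℝ) :
    (∑ i, (y i)^2) - μ * ((∑ i, |y i|)^2 - ∑ i, (y i)^2)
      ≤ ∑ k, (A.mulVec y k)^2 := by
  have hg : ∑ k, (A.mulVec y k)^2 = ∑ i, ∑ j, y i * y j * (∑ k, A k i * A k j) := by
    rw [← gram A y y]; exact Finset.sum_congr rfl fun k _ => (sq (A.mulVec y k)) ▸ rfl
  have hsplit : ∀ i : Fin n, ∑ j, y i * y j * (∑ k, A k i * A k j)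
      = (y i)^2 + ∑ j ∈ Finset.univ.erase i, y i * y j * (∑ k, A k i * A k j) := by
    intro i
    rw [← Finset.add_sum_erase Finset.univ _ (Finset.mem_univ i)]
    congr 1
    have : ∑ k, A k i * A k i = 1 := by rw [← hcol i]; exact Finset.sum_congr rfl fun k _ => (sq (A k i)).symm
    rw [this]; ring
  rw [hg, Finset.sum_congr rfl fun i _ => hsplit i, Finset.sum_add_distrib]
  have hR : |∑ i, ∑ j ∈ Finset.univ.erase i, y i * y j * (∑ k, A k i * A k j)|
      ≤ μ * ((∑ i, |y i|)^2 - ∑ i, (y i)^2) := by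
    calc |∑ i, ∑ j ∈ Finset.univ.erase i, y i * y j * (∑ k, A k i * A k j)|
        ≤ ∑ i, |∑ j ∈ Finset.univ.erase i, y i * y j * (∑ k, A k i * A k j)| :=
          Finset.abs_sum_le_sum_abs _ _
      _ ≤ ∑ i, ∑ j ∈ Finset.univ.erase i, |y i * y j * (∑ k, A k i * A k j)| :=
          Finset.sum_le_sum fun i _ => Finset.abs_sum_le_sum_abs _ _
      _ ≤ ∑ i, ∑ j ∈ Finset.univ.erase i, |y i| * |y j| * μ := by
          refine Finset.sum_le_sum fun i _ => Finset.sum_le_sum fun j hj => ?_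
          rw [abs_mul, abs_mul]
          exact mul_le_mul_of_nonneg_left (hμ j i (Finset.ne_of_mem_erase hj))
            (mul_nonneg (abs_nonneg _) (abs_nonneg _))
      _ = μ * ((∑ i, |y i|)^2 - ∑ i, (y i)^2) := by
          have h1 : ∀ i : Fin n, ∑ j ∈ Finset.univ.erase i, |y i| * |y j| * μ
              = μ * (|y i| * ((∑ j, |y j|) - |y i|)) := by
            intro i
            calc ∑ j ∈ Finset.univ.erase i, |y i| * |y j| * μ
                = ∑ j ∈ Finset.univ.erase i, (μ * |y i|) * |y j| :=
                  Finset.sum_congr rfl fun j _ => by ring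
              _ = (μ * |y i|) * ∑ j ∈ Finset.univ.erase i, |y j| := by
                  rw [Finset.mul_sum]
              _ = μ * (|y i| * ((∑ j, |y j|) - |y i|)) := by
                  rw [Finset.sum_erase_eq_sub (Finset.mem_univ i)]; ring
          rw [Finset.sum_congr rfl fun i _ => h1 i, ← Finset.mul_sum]
          congr 1
          simp only [mul_sub]
          rw [Finset.sum_sub_distrib, ← Finset.sum_mul]
          have h2 : ∀ i : Fin n, |y i| * |y i| = (y i)^2 := fun i => by
            rw [← abs_mul, abs_mul_self]; ring
          rw [Finset.sum_congr rfl fun i _ => h2 i]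
          ring
  have := neg_abs_le (∑ i, ∑ j ∈ Finset.univ.erase i, y i * y j * (∑ k, A k i * A k j))
  linarith

lemma cross_bound {m n : ℕ} (A : Matrix (Fin m) (Fin n) ℝ) (μ : ℝ) (hμ0 : 0 ≤ μ)
    (hμ : ∀ i j, i ≠ j → |∑ k, A k j * A k i| ≤ μ) (y z : Fin n → ℝ)
    (hyz : ∀ i, y i * z i = 0) :
    |∑ k, A.mulVec y k * A.mulVec z k| ≤ μ * (l1 y * l1 z) := by
  rw [gram]
  calc |∑ i, ∑ j, y i * z j * (∑ k, A k i * A k j)|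
      ≤ ∑ i, |∑ j, y i * z j * (∑ k, A k i * A k j)| := Finset.abs_sum_le_sum_abs _ _
    _ ≤ ∑ i, ∑ j, |y i * z j * (∑ k, A k i * A k j)| :=
        Finset.sum_le_sum fun i _ => Finset.abs_sum_le_sum_abs _ _
    _ ≤ ∑ i, ∑ j, |y i| * |z j| * μ := by
        refine Finset.sum_le_sum fun i _ => Finset.sum_le_sum fun j _ => ?_
        rcases eq_or_ne i j with rfl | hij
        · rw [abs_mul, abs_mul, ← abs_mul, hyz i, abs_zero, zero_mul, zero_mul]
        · rw [abs_mul, abs_mul]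
          exact mul_le_mul_of_nonneg_left (hμ j i hij.symm)
            (mul_nonneg (abs_nonneg _) (abs_nonneg _))
    _ = μ * (l1 y * l1 z) := by
        unfold l1
        rw [Finset.sum_mul_sum]
        rw [Finset.mul_sum]
        refine Finset.sum_congr rfl fun i _ => ?_
        rw [Finset.mul_sum]
        exact Finset.sum_congr rfl fun j _ => by ring

lemma l1_sq_le {k : ℕ} (J : Finset (Fin k)) (x : Fin k → ℝ) :
    (l1 (restr J x))^2 ≤ J.card * (l2 (restr J x))^2 := by
  rw [l1_restr, l2sq_restr]
  have := sq_sum_le_card_mul_sum_sq (s := J) (f := fun i => |x i|)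
  simpa [sq_abs] using this

lemma sq_le_helper {a b : ℝ} (ha : 0 ≤ a) (hb : 0 ≤ b) (h : a^2 ≤ b^2) : a ≤ b := by
  nlinarith [h, ha, hb]

set_option maxHeartbeats 2000000 in
theorem stmt16 {m n : ℕ} (A : Matrix (Fin m) (Fin n) ℝ) (s t : ℕ) (ht : 1 < t)
    (μ : ℝ) (hμ0 : 0 ≤ μ)
    (hcol : ∀ i, ∑ k, (A k i)^2 = 1)
    (hμ : ∀ i j, i ≠ j → |∑ k, A k j * A k i| ≤ μ)
    (hcond : μ < (Real.sqrt t - 1) /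
      ((s + t) * (Real.sqrt t - 1) + 2 * Real.sqrt (t * (s + t)) * (Real.sqrt s + 1))) :
    0 < 1 - (s + t) * μ - 2 * μ * Real.sqrt (t * (s + t)) * (Real.sqrt s + 1) / (Real.sqrt t - 1) ∧
    ∀ (x : Fin n → ℝ) (I T : Finset (Fin n)), I.card ≤ s →
      l1 (restr Iᶜ x) ≤ l1 (restr I x) + l2 x → TLargest x I t T →
      Real.sqrt (1 - (s + t) * μ -
          2 * μ * Real.sqrt (t * (s + t)) * (Real.sqrt s + 1) / (Real.sqrt t - 1)) *
        l2 (restr (I ∪ T) x) ≤ l2 (A.mulVec x) := by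
  have htR : (2:ℝ) ≤ (t:ℝ) := by exact_mod_cast ht
  have hst1 : 1 < Real.sqrt t := by
    rw [show (1:ℝ) = Real.sqrt 1 from Real.sqrt_one.symm]
    exact Real.sqrt_lt_sqrt (by norm_num) (by linarith)
  have hst0 : (0:ℝ) < Real.sqrt t - 1 := by linarith
  have hstsq : (Real.sqrt t)^2 = (t:ℝ) := Real.sq_sqrt (by positivity)
  have hss0 : (0:ℝ) ≤ Real.sqrt s := Real.sqrt_nonneg _
  have hsssq : (Real.sqrt s)^2 = (s:ℝ) := Real.sq_sqrt (by positivity)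
  have hsst0 : (0:ℝ) ≤ Real.sqrt ((s:ℝ) + (t:ℝ)) := Real.sqrt_nonneg _
  have hsstsq : (Real.sqrt ((s:ℝ) + (t:ℝ)))^2 = (s:ℝ) + (t:ℝ) := Real.sq_sqrt (by positivity)
  have hmulsq : Real.sqrt ((t:ℝ) * ((s:ℝ) + (t:ℝ)))
      = Real.sqrt t * Real.sqrt ((s:ℝ) + (t:ℝ)) := Real.sqrt_mul (by positivity) _
  set D := 1 - ((s:ℝ) + (t:ℝ)) * μ - 2 * μ * Real.sqrt ((t:ℝ) * ((s:ℝ) + (t:ℝ))) *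
      (Real.sqrt s + 1) / (Real.sqrt t - 1) with hD
  have hden : 0 < ((s:ℝ) + (t:ℝ)) * (Real.sqrt t - 1) +
      2 * Real.sqrt ((t:ℝ) * ((s:ℝ) + (t:ℝ))) * (Real.sqrt s + 1) := by
    have h1 : (0:ℝ) ≤ Real.sqrt ((t:ℝ) * ((s:ℝ) + (t:ℝ))) := Real.sqrt_nonneg _
    have h3 : (0:ℝ) ≤ (s:ℝ) := by positivity
    nlinarith
  have hmu_den : μ * (((s:ℝ) + (t:ℝ)) * (Real.sqrt t - 1) +
      2 * Real.sqrt ((t:ℝ) * ((s:ℝ) + (t:ℝ))) * (Real.sqrt s + 1)) < Real.sqrt t - 1 :=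
    (lt_div_iff₀ hden).mp hcond
  have hDpos : 0 < D := by
    have hrw : D = ((Real.sqrt t - 1) - μ * (((s:ℝ) + (t:ℝ)) * (Real.sqrt t - 1) +
        2 * Real.sqrt ((t:ℝ) * ((s:ℝ) + (t:ℝ))) * (Real.sqrt s + 1))) / (Real.sqrt t - 1) := by
      rw [hD]; field_simp; ring
    rw [hrw]
    exact div_pos (by linarith) hst0
  refine ⟨hDpos, ?_⟩
  intro x I T hI hcone hT
  obtain ⟨hTsub, hTcard, hTmax⟩ := hT
  set y := restr (I ∪ T) x with hy
  set z := restr (I ∪ T)ᶜ x with hz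
  set b := l2 y with hb
  have hb0 : 0 ≤ b := l2_nonneg _
  set a := l1 z with ha
  have ha0 : 0 ≤ a := l1_nonneg _
  set L := l1 y with hL
  have hL0 : 0 ≤ L := l1_nonneg _
  have hJc : (I ∪ T)ᶜ = Iᶜ \ T := by
    ext j; simp only [Finset.mem_compl, Finset.mem_union, Finset.mem_sdiff]; tauto
  -- main quadratic estimate reduces the goal
  suffices hmain : D * b^2 ≤ ∑ k, (A.mulVec x k)^2 by
    calc Real.sqrt D * b = Real.sqrt (D * b^2) := by
          rw [Real.sqrt_mul hDpos.le, Real.sqrt_sq hb0]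
      _ ≤ Real.sqrt (∑ k, (A.mulVec x k)^2) := Real.sqrt_le_sqrt hmain
      _ = l2 (A.mulVec x) := rfl
  -- decomposition of ||Ax||^2
  have hyz0 : ∀ i, y i * z i = 0 := by
    intro i
    rw [hy, hz]; unfold restr
    by_cases h : i ∈ I ∪ T
    · have h' : i ∉ (I ∪ T)ᶜ := fun hc => absurd h (Finset.mem_compl.mp hc)
      rw [if_pos h, if_neg h']; ring
    · rw [if_neg h]; ring
  have hxyz : x = fun i => y i + z i := by
    funext i
    rw [hy, hz]; unfold restr
    by_cases h : i ∈ I ∪ T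
    · have h' : i ∉ (I ∪ T)ᶜ := fun hc => absurd h (Finset.mem_compl.mp hc)
      rw [if_pos h, if_neg h']; ring
    · have h' : i ∈ (I ∪ T)ᶜ := Finset.mem_compl.mpr h
      rw [if_neg h, if_pos h']; ring
  have hsum : ∑ k, (A.mulVec x k)^2 = ∑ k, (A.mulVec y k)^2 +
      2 * (∑ k, A.mulVec y k * A.mulVec z k) + ∑ k, (A.mulVec z k)^2 := by
    have hmv : A.mulVec x = fun k => A.mulVec y k + A.mulVec z k := by
      rw [hxyz]
      funext k
      have : (fun i => y i + z i) = y + z := rfl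
      rw [this, Matrix.mulVec_add]; rfl
    rw [hmv]
    have he : ∀ k : Fin m, (A.mulVec y k + A.mulVec z k)^2
        = (A.mulVec y k)^2 + 2 * (A.mulVec y k * A.mulVec z k) + (A.mulVec z k)^2 :=
      fun k => by ring
    rw [Finset.sum_congr rfl fun k _ => he k, Finset.sum_add_distrib, Finset.sum_add_distrib,
      ← Finset.mul_sum]
  have hzz : 0 ≤ ∑ k, (A.mulVec z k)^2 := Finset.sum_nonneg fun _ _ => sq_nonneg _
  have hyy : ∑ i, (y i)^2 = b^2 := (l2_sq y).symm
  have hdiag : b^2 - μ * (L^2 - b^2) ≤ ∑ k, (A.mulVec y k)^2 := by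
    have := diag_bound A μ hμ0 hcol hμ y
    have hLeq : (∑ i, |y i|) = L := rfl
    rw [hLeq, hyy] at this
    exact this
  have hcross : |∑ k, A.mulVec y k * A.mulVec z k| ≤ μ * (L * a) :=
    cross_bound A μ hμ0 hμ y z hyz0
  have hC := abs_le.mp hcross
  -- L ≤ sqrt(s+t) * b
  have hcard : ((I ∪ T).card : ℝ) ≤ (s:ℝ) + (t:ℝ) := by
    have h1 : (I ∪ T).card ≤ I.card + T.card := Finset.card_union_le _ _
    have h2 : T.card ≤ t := hTcard ▸ min_le_left _ _
    have : (I ∪ T).card ≤ s + t := le_trans h1 (add_le_add hI h2)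
    exact_mod_cast this
  have hL2 : L^2 ≤ ((s:ℝ) + (t:ℝ)) * b^2 := by
    have h1 := l1_sq_le (I ∪ T) x
    rw [← hy, ← hL, ← hb] at h1
    exact le_trans h1 (mul_le_mul_of_nonneg_right hcard (sq_nonneg _))
  have hLb : L ≤ Real.sqrt ((s:ℝ) + (t:ℝ)) * b := by
    refine sq_le_helper hL0 (mul_nonneg hsst0 hb0) ?_
    rw [mul_pow, hsstsq]; exact hL2
  -- the key inequality a (sqrt t - 1) ≤ sqrt t (sqrt s + 1) b
  have hb2 : b^2 = ∑ i ∈ I ∪ T, (x i)^2 := by rw [hb, hy, l2sq_restr]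
  have haeq : a = ∑ j ∈ Iᶜ \ T, |x j| := by rw [ha, hz, l1_restr, hJc]
  have hKey : a * (Real.sqrt t - 1) ≤ Real.sqrt t * (Real.sqrt s + 1) * b := by
    rcases lt_or_ge (Iᶜ.card) t with hsmall | hbig
    · -- here T = Iᶜ and a = 0
      have hTeq : T = Iᶜ := Finset.eq_of_subset_of_card_le hTsub
        (by rw [hTcard, min_eq_right hsmall.le])
      have ha' : a = 0 := by
        rw [haeq, hTeq]
        simp
      rw [ha']
      have h0 : 0 ≤ Real.sqrt t * (Real.sqrt s + 1) * b :=
        mul_nonneg (mul_nonneg (Real.sqrt_nonneg _) (by linarith)) hb0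
      linarith
    · have hTt : T.card = t := by rw [hTcard]; exact min_eq_left hbig
      -- tail entries are small: √t * |x j| ≤ b
      have hbT : ∀ j ∈ (I ∪ T)ᶜ, Real.sqrt t * |x j| ≤ b := by
        intro j hj
        have hj' : j ∈ Iᶜ \ T := hJc ▸ hj
        have h1' : (t:ℝ) * |x j|^2 ≤ ∑ i ∈ T, (x i)^2 := by
          calc (t:ℝ) * |x j|^2 = ∑ _i ∈ T, |x j|^2 := by
                rw [Finset.sum_const, hTt, nsmul_eq_mul]
            _ ≤ ∑ i ∈ T, (x i)^2 := by
                refine Finset.sum_le_sum fun i hi => ?_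
                have h := hTmax i hi j hj'
                nlinarith [abs_nonneg (x j), sq_abs (x i)]
        have h2' : ∑ i ∈ T, (x i)^2 ≤ b^2 := by
          rw [hb2]
          exact Finset.sum_le_sum_of_subset_of_nonneg Finset.subset_union_right
            (fun i _ _ => sq_nonneg (x i))
        refine sq_le_helper (mul_nonneg (Real.sqrt_nonneg _) (abs_nonneg _)) hb0 ?_
        calc (Real.sqrt t * |x j|)^2 = (Real.sqrt t)^2 * |x j|^2 := by ring
          _ = (t:ℝ) * |x j|^2 := by rw [hstsq]
          _ ≤ b^2 := le_trans h1' h2'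
      -- aggregate tail bound
      have hz2 : Real.sqrt t * (∑ j ∈ (I ∪ T)ᶜ, (x j)^2) ≤ b * a := by
        have hterm : ∀ j ∈ (I ∪ T)ᶜ, Real.sqrt t * (x j)^2 ≤ b * |x j| := by
          intro j hj
          have h1 := hbT j hj
          have h2 : (x j)^2 = |x j| * |x j| := by rw [← sq_abs]; ring
          nlinarith [abs_nonneg (x j)]
        calc Real.sqrt t * ∑ j ∈ (I ∪ T)ᶜ, (x j)^2
            = ∑ j ∈ (I ∪ T)ᶜ, Real.sqrt t * (x j)^2 := Finset.mul_sum _ _ _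
          _ ≤ ∑ j ∈ (I ∪ T)ᶜ, b * |x j| := Finset.sum_le_sum hterm
          _ = b * ∑ j ∈ (I ∪ T)ᶜ, |x j| := (Finset.mul_sum _ _ _).symm
          _ = b * a := by rw [ha, hz, l1_restr]
      -- bound on l2 x
      have hx2 : (l2 x)^2 = b^2 + ∑ j ∈ (I ∪ T)ᶜ, (x j)^2 := by
        rw [l2_sq, ← Finset.sum_add_sum_compl (I ∪ T) (fun i => (x i)^2), hb2]
      have hl2x0 : 0 ≤ l2 x := l2_nonneg x
      have hl2x : 2 * Real.sqrt t * l2 x ≤ 2 * Real.sqrt t * b + a := by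
        refine sq_le_helper (mul_nonneg (by positivity) hl2x0)
          (add_nonneg (mul_nonneg (by positivity) hb0) ha0) ?_
        have h4 : 4 * Real.sqrt t * (Real.sqrt t * (∑ j ∈ (I ∪ T)ᶜ, (x j)^2))
            ≤ 4 * Real.sqrt t * (b * a) :=
          mul_le_mul_of_nonneg_left hz2 (by positivity)
        have e : (2 * Real.sqrt t * l2 x)^2
            = 4 * (Real.sqrt t * (Real.sqrt t * (∑ j ∈ (I ∪ T)ᶜ, (x j)^2)))
              + 4 * (Real.sqrt t)^2 * b^2 := by
          linear_combination 4 * (Real.sqrt t)^2 * hx2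
        rw [e]
        linarith [h4, sq_nonneg a]
      -- bound on l1 (restr I x)
      have hxI : l1 (restr I x) ≤ Real.sqrt s * b := by
        have hI2 : (l1 (restr I x))^2 ≤ (s:ℝ) * b^2 := by
          have h1 := l1_sq_le I x
          have h2 : (l2 (restr I x))^2 ≤ b^2 := by
            rw [l2sq_restr, hb2]
            exact Finset.sum_le_sum_of_subset_of_nonneg Finset.subset_union_left
              (fun i _ _ => sq_nonneg (x i))
          calc (l1 (restr I x))^2 ≤ (I.card : ℝ) * (l2 (restr I x))^2 := h1
            _ ≤ (s:ℝ) * b^2 := by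
                have hIc : (I.card : ℝ) ≤ (s:ℝ) := by exact_mod_cast hI
                have := mul_le_mul hIc h2 (sq_nonneg _) (by positivity)
                exact this
        refine sq_le_helper (l1_nonneg _) (mul_nonneg hss0 hb0) ?_
        rw [mul_pow, hsssq]; exact hI2
      -- split the cone condition
      have hsplit1 : l1 (restr Iᶜ x) = a + l1 (restr T x) := by
        rw [l1_restr, l1_restr, haeq, ← Finset.sum_sdiff hTsub]
      have hτ : 0 ≤ l1 (restr T x) := l1_nonneg _
      have hcone2 : a ≤ Real.sqrt s * b + l2 x := by
        rw [hsplit1] at hcone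
        linarith
      have hcone3 : 2 * Real.sqrt t * a ≤ 2 * Real.sqrt t * (Real.sqrt s * b + l2 x) :=
        mul_le_mul_of_nonneg_left hcone2 (by positivity)
      linarith [hcone3, hl2x, ha0]
  -- final arithmetic
  have e1 : μ * L^2 ≤ μ * (((s:ℝ) + (t:ℝ)) * b^2) := mul_le_mul_of_nonneg_left hL2 hμ0
  have e2 : μ * (L * a) ≤ μ * ((Real.sqrt ((s:ℝ) + (t:ℝ)) * b) * a) :=
    mul_le_mul_of_nonneg_left (mul_le_mul_of_nonneg_right hLb ha0) hμ0
  have e3 : (2 * μ * Real.sqrt ((s:ℝ) + (t:ℝ)) * b) * (a * (Real.sqrt t - 1))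
      ≤ (2 * μ * Real.sqrt ((s:ℝ) + (t:ℝ)) * b) * (Real.sqrt t * (Real.sqrt s + 1) * b) :=
    mul_le_mul_of_nonneg_left hKey (by positivity)
  have hDexp : D * (Real.sqrt t - 1) = (Real.sqrt t - 1) - ((s:ℝ) + (t:ℝ)) * μ * (Real.sqrt t - 1)
      - 2 * μ * (Real.sqrt t * Real.sqrt ((s:ℝ) + (t:ℝ))) * (Real.sqrt s + 1) := by
    rw [hD, hmulsq]; field_simp
  have hpoly : D * b^2 * (Real.sqrt t - 1)
      ≤ (b^2 - μ * (L^2 - b^2) - 2 * (μ * (L * a))) * (Real.sqrt t - 1) := by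
    have f1 : μ * L^2 * (Real.sqrt t - 1) ≤ μ * (((s:ℝ) + (t:ℝ)) * b^2) * (Real.sqrt t - 1) :=
      mul_le_mul_of_nonneg_right e1 hst0.le
    have f2 : (μ * (L * a)) * (Real.sqrt t - 1)
        ≤ (μ * ((Real.sqrt ((s:ℝ) + (t:ℝ)) * b) * a)) * (Real.sqrt t - 1) :=
      mul_le_mul_of_nonneg_right e2 hst0.le
    have g1 : 0 ≤ μ * b^2 * (Real.sqrt t - 1) := by positivity
    have hDexp2 : D * b^2 * (Real.sqrt t - 1)
        = ((Real.sqrt t - 1) - ((s:ℝ) + (t:ℝ)) * μ * (Real.sqrt t - 1)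
            - 2 * μ * (Real.sqrt t * Real.sqrt ((s:ℝ) + (t:ℝ))) * (Real.sqrt s + 1)) * b^2 := by
      rw [hD, hmulsq]
      have hc := div_mul_cancel₀ (2 * μ * (Real.sqrt t * Real.sqrt ((s:ℝ) + (t:ℝ))) *
        (Real.sqrt s + 1)) hst0.ne'
      linear_combination (-(b^2)) * hc
    rw [hDexp2]
    linarith [f1, f2, e3, g1]
  have hq : D * b^2 ≤ b^2 - μ * (L^2 - b^2) - 2 * (μ * (L * a)) :=
    (mul_le_mul_iff_of_pos_right hst0).mp hpoly
  linarith [hdiag, hC.1, hC.2, hzz, hsum.ge, hsum.le, hq]
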